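/- Let δ > 0 and let a, b : ℂ → ℂ be bounded functions. Then Γ(z + a(z)) / Γ(z + b(z)) is asymptotically equivalent to z^{a(z) − b(z)} as |z| → ∞ in the sector |arg z| < π − δ; that is, the quotient [ Γ(z + a(z)) / Γ(z + b(z)) ] / z^{a(z) − b(z)} tends to 1 as |z| → ∞ with |arg z| < π − δ (where z^{w} denotes the principal branch). -/

import Mathlib

open Complex Filter Topology



/-- Branch lemma: `Log(u+c) - Log u = Log((u+c)/u)` under half-plane conditions. -/
lemma logA {u c : ℂ} (h1 : ‖c‖ < ‖u‖)
    (h2 : (0 ≤ u.re ∧ 0 ≤ (u+c).re) ∨ (0 ≤ u.im ∧ 0 ≤ (u+c).im) ∨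
      (u.im < 0 ∧ (u+c).im < 0)) :
    Complex.log (u+c) - Complex.log u = Complex.log ((u+c)/u) := by
  have hu0 : 0 < ‖u‖ := lt_of_le_of_lt (norm_nonneg c) h1
  have hu : u ≠ 0 := by
    intro h; rw [h] at hu0; simp at hu0
  have huc : u + c ≠ 0 := by
    intro h
    have : u = -c := by linear_combination h
    rw [this] at h1; simp at h1
  have hr : (u + c) / u ≠ 0 := div_ne_zero huc hu
  have hexp : Complex.exp (Complex.log (u+c) - Complex.log u)
      = Complex.exp (Complex.log ((u+c)/u)) := by
    rw [Complex.exp_sub, Complex.exp_log huc, Complex.exp_log hu, Complex.exp_log hr]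
  obtain ⟨n, hn⟩ := Complex.exp_eq_exp_iff_exists_int.mp hexp
  have him : (u+c).arg - u.arg = ((u+c)/u).arg + (n : ℝ) * (2 * Real.pi) := by
    have := congrArg Complex.im hn
    simpa [Complex.log_im, Complex.add_im, Complex.sub_im, Complex.mul_im,
      Complex.mul_re] using this
  have hre : 0 < ((u+c)/u).re := by
    have he : (u+c)/u - 1 = c / u := by field_simp; ring
    have h3 : ‖(u+c)/u - 1‖ < 1 := by
      rw [he, norm_div, div_lt_one hu0]; exact h1
    have h4 : |((u+c)/u).re - 1| < 1 := by
      calc |((u+c)/u).re - 1| = |((u+c)/u - 1).re| := by simp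
        _ ≤ ‖(u+c)/u - 1‖ := Complex.abs_re_le_norm _
        _ < 1 := h3
    have := abs_lt.mp h4
    linarith [this.1]
  have hargr : |((u+c)/u).arg| ≤ Real.pi / 2 :=
    Complex.abs_arg_le_pi_div_two_iff.mpr hre.le
  have hdiff : |(u+c).arg - u.arg| ≤ Real.pi := by
    rcases h2 with ⟨h5, h6⟩ | ⟨h5, h6⟩ | ⟨h5, h6⟩
    · have a1 := abs_le.mp (Complex.abs_arg_le_pi_div_two_iff.mpr h5)
      have a2 := abs_le.mp (Complex.abs_arg_le_pi_div_two_iff.mpr h6)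
      have hpi := Real.pi_pos
      rw [abs_le]; constructor <;> [linarith [a1.1, a2.2]; linarith [a1.2, a2.1]]
    · have a1 := Complex.arg_nonneg_iff.mpr h5
      have a2 := Complex.arg_nonneg_iff.mpr h6
      have b1 := Complex.arg_le_pi u
      have b2 := Complex.arg_le_pi (u+c)
      rw [abs_le]; constructor <;> linarith
    · have a1 := Complex.arg_neg_iff.mpr h5
      have a2 := Complex.arg_neg_iff.mpr h6
      have b1 := Complex.neg_pi_lt_arg u
      have b2 := Complex.neg_pi_lt_arg (u+c)
      rw [abs_le]; constructor <;> linarith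
  have hn0 : n = 0 := by
    have hpi := Real.pi_pos
    have habs : |(n : ℝ)| * (2 * Real.pi) ≤ 3 / 2 * Real.pi := by
      have : (n : ℝ) * (2 * Real.pi) = ((u+c).arg - u.arg) - ((u+c)/u).arg := by
        linarith [him]
      calc |(n : ℝ)| * (2 * Real.pi) = |(n : ℝ) * (2 * Real.pi)| := by
            rw [abs_mul]; congr 1; rw [abs_of_pos (by positivity)]
        _ = |((u+c).arg - u.arg) - ((u+c)/u).arg| := by rw [this]
        _ ≤ |(u+c).arg - u.arg| + |((u+c)/u).arg| := abs_sub _ _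
        _ ≤ Real.pi + Real.pi / 2 := add_le_add hdiff hargr
        _ = 3 / 2 * Real.pi := by ring
    have h7 : |(n : ℝ)| < 1 := by nlinarith
    have h8 : |n| < 1 := by exact_mod_cast (by push_cast; exact h7 : |(n:ℝ)| < (1:ℤ))
    exact Int.abs_lt_one_iff.mp h8
  rw [hn0] at hn
  simpa using hn


lemma sum_inv_sq_le {t : ℝ} (ht : 2 ≤ t) (n : ℕ) :
    ∑ j ∈ Finset.range n, ((t + j)^2)⁻¹ ≤ (t - 1)⁻¹ := by
  have key : ∀ m : ℕ, ∑ j ∈ Finset.range m, ((t + j)^2)⁻¹ ≤ (t-1)⁻¹ - (t+m-1)⁻¹ := by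
    intro m
    induction m with
    | zero => simp
    | succ k ih =>
      rw [Finset.sum_range_succ]
      have h1 : (0:ℝ) < t + k - 1 := by
        have : (0:ℝ) ≤ k := Nat.cast_nonneg k; linarith
      have h2 : (0:ℝ) < t + k := by linarith
      have h3 : ((t + k)^2)⁻¹ ≤ (t+k-1)⁻¹ - (t+k)⁻¹ := by
        rw [inv_sub_inv (by linarith) (by linarith), inv_eq_one_div,
          div_le_div_iff₀ (by positivity) (by positivity)]
        nlinarith
      have hcast : t + ((k:ℝ)+1) - 1 = t + k := by ring
      push_cast
      rw [hcast]
      linarith [ih]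
  have h4 : (0:ℝ) < t + n - 1 := by
    have : (0:ℝ) ≤ n := Nat.cast_nonneg n; linarith
  linarith [key n, inv_pos.mpr h4]

lemma logest {x : ℂ} (hx : ‖x‖ ≤ 1/2) :
    ‖Complex.log (1+x) - x‖ ≤ ‖x‖ ^ 2 := by
  have h1 : ‖x‖ < 1 := lt_of_le_of_lt hx (by norm_num)
  have h0 := Complex.norm_log_one_add_sub_self_le h1
  have h2 : (1 - ‖x‖)⁻¹ ≤ 2 := by
    rw [inv_le_comm₀ (by linarith [norm_nonneg x]) (by norm_num)]
    linarith
  calc ‖Complex.log (1+x) - x‖ = ‖Complex.log (1+x) - x‖ := rfl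
    _ ≤ ‖x‖^2 * (1-‖x‖)⁻¹ / 2 := h0
    _ ≤ ‖x‖^2 * 2 / 2 := by gcongr
    _ = ‖x‖ ^ 2 := by simp

lemma sector_im {z : ℂ} {d : ℝ} (h0 : 0 < d) (h1 : d ≤ Real.pi/2)
    (harg : |z.arg| < Real.pi - d) (hre : z.re < 0) :
    Real.sin d * ‖z‖ ≤ |z.im| := by
  have hz : z ≠ 0 := by intro h; rw [h] at hre; simp at hre
  have habs : 0 < ‖z‖ := norm_pos_iff.mpr hz
  have hhalf : Real.pi/2 < |z.arg| := by
    by_contra h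
    push_neg at h
    exact absurd (Complex.abs_arg_le_pi_div_two_iff.mp h) (not_le.mpr hre)
  have hle : |z.arg| ≤ Real.pi := Complex.abs_arg_le_pi z
  have hsin1 : Real.sin d ≤ Real.sin |z.arg| := by
    have h5 : Real.sin |z.arg| = Real.sin (Real.pi - |z.arg|) := (Real.sin_pi_sub _).symm
    rw [h5]
    apply Real.sin_le_sin_of_le_of_le_pi_div_two (by linarith) (by linarith) (by linarith)
  have hsin2 : |Real.sin z.arg| = Real.sin |z.arg| := by
    rcases le_or_gt 0 z.arg with h | h
    · rw [_root_.abs_of_nonneg h,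
        _root_.abs_of_nonneg (Real.sin_nonneg_of_nonneg_of_le_pi h (Complex.arg_le_pi z))]
    · have h6 : 0 ≤ Real.sin (-z.arg) :=
        Real.sin_nonneg_of_nonneg_of_le_pi (by linarith) (by linarith [Complex.neg_pi_lt_arg z])
      rw [Real.sin_neg] at h6
      rw [abs_of_neg h, _root_.abs_of_nonpos (by linarith), Real.sin_neg]
  have him : z.im = ‖z‖ * Real.sin z.arg := (Complex.norm_mul_sin_arg z).symm
  rw [him, abs_mul, abs_of_pos habs, hsin2]
  have := mul_le_mul_of_nonneg_left hsin1 habs.le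
  linarith [this]

lemma sector_lower {z : ℂ} {s : ℝ} (h0 : 0 < s) (h1 : s ≤ 1)
    (him : z.re < 0 → s * ‖z‖ ≤ |z.im|) {j : ℝ} (hj : 0 ≤ j) :
    s/3 * (‖z‖ + j) ≤ ‖z + j‖ := by
  have hA : 0 ≤ ‖z‖ := norm_nonneg z
  rcases le_or_gt 0 z.re with hre | hre
  · have hsq : (s/3 * (‖z‖ + j))^2 ≤ ‖z + j‖^2 := by
      have e1 : ‖z+j‖^2 = (z.re + j)^2 + z.im^2 := by
        rw [Complex.sq_norm, Complex.normSq_apply]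
        simp [Complex.add_re, Complex.add_im]
        ring
      have e2 : ‖z‖^2 = z.re^2 + z.im^2 := by
        rw [Complex.sq_norm, Complex.normSq_apply]; ring
      have hs2 : s^2 ≤ 1 := by nlinarith
      nlinarith [sq_nonneg (‖z‖ - j), mul_nonneg hre hj,
        mul_nonneg (by linarith : (0:ℝ) ≤ 1 - s^2) (sq_nonneg (‖z‖ + j))]
    have := Real.sqrt_le_sqrt hsq
    rwa [Real.sqrt_sq (by positivity), Real.sqrt_sq (norm_nonneg _)] at this
  · have hIm := him hre
    rcases le_or_gt j (2 * ‖z‖) with hc | hc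
    · have h2 : |z.im| ≤ ‖z + j‖ := by
        have h7 : (z+(j:ℂ)).im = z.im := by simp
        rw [← h7]
        exact Complex.abs_im_le_norm _
      nlinarith [mul_le_mul_of_nonneg_left hc h0.le]
    · have h3 : j - ‖z‖ ≤ ‖z + j‖ := by
        have htri := norm_add_le (z + (j:ℂ)) (-z)
        have e2 : (z + ((j:ℝ):ℂ)) + (-z) = ((j:ℝ):ℂ) := by ring
        rw [e2, norm_neg, Complex.norm_of_nonneg hj] at htri
        linarith
      nlinarith [mul_nonneg (by linarith : (0:ℝ) ≤ 1 - s) (by linarith : (0:ℝ) ≤ ‖z‖ + j)]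


set_option maxHeartbeats 1600000 in
/-- Equation (A.1): a strengthening of the Stirling-type asymptotics
`Γ(z + a(z))/Γ(z + b(z)) ∼ z^{a(z) - b(z)}` as `|z| → ∞` in the sector
`|arg z| < π - δ`, for bounded functions `a` and `b`. -/
theorem gamma_ratio_asymptotic (δ : ℝ) (hδ : 0 < δ) (a b : ℂ → ℂ)
    (ha : ∃ C : ℝ, ∀ z : ℂ, ‖a z‖ ≤ C)
    (hb : ∃ C : ℝ, ∀ z : ℂ, ‖b z‖ ≤ C) :
    ∀ ε : ℝ, 0 < ε → ∃ R : ℝ, ∀ z : ℂ,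
      R ≤ ‖z‖ → |z.arg| < Real.pi - δ →
      ‖Complex.Gamma (z + a z) / Complex.Gamma (z + b z)
        / z ^ (a z - b z) - 1‖ < ε := by
  obtain ⟨Ca, hCa⟩ := ha
  obtain ⟨Cb, hCb⟩ := hb
  intro ε hε
  set M : ℝ := max (max Ca Cb) 1 with hMdef
  have hM1 : (1:ℝ) ≤ M := le_max_right _ _
  have hM0 : (0:ℝ) < M := lt_of_lt_of_le one_pos hM1
  have haM : ∀ z, ‖a z‖ ≤ M :=
    fun z => (hCa z).trans ((le_max_left _ _).trans (le_max_left _ _))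
  have hbM : ∀ z, ‖b z‖ ≤ M :=
    fun z => (hCb z).trans ((le_max_right _ _).trans (le_max_left _ _))
  have hpi := Real.pi_pos
  set d : ℝ := min δ (Real.pi/2) with hddef
  have hd0 : 0 < d := lt_min hδ (by linarith)
  have hd2 : d ≤ Real.pi/2 := min_le_right _ _
  set s : ℝ := Real.sin d with hsdef
  have hs0 : 0 < s := Real.sin_pos_of_pos_of_lt_pi hd0 (lt_of_le_of_lt hd2 (by linarith))
  have hs1 : s ≤ 1 := Real.sin_le_one d
  set ε₁ : ℝ := min (ε/4) 1 with hε₁def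
  have hε₁ : 0 < ε₁ := lt_min (by linarith) one_pos
  set K : ℝ := 288 * M^2 / s^2 with hKdef
  have hK0 : 0 < K := by positivity
  refine ⟨max (max 2 (48*M/s)) (K/ε₁ + 2), fun z hzR hzarg => ?_⟩
  set t : ℝ := ‖z‖ with htdef
  have ht2 : 2 ≤ t := le_trans ((le_max_left _ _).trans (le_max_left _ _)) hzR
  have htM : 48*M/s ≤ t := le_trans ((le_max_right _ _).trans (le_max_left _ _)) hzR
  have htK : K/ε₁ + 2 ≤ t := le_trans (le_max_right _ _) hzR
  have hz0 : z ≠ 0 := by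
    intro h
    rw [htdef, h, norm_zero] at ht2
    norm_num at ht2
  -- basic sector bounds
  have hc0t : 16*M ≤ s/3*t := by
    have h1 : s/3 * (48*M/s) ≤ s/3*t := by
      apply mul_le_mul_of_nonneg_left htM; positivity
    have h2 : s/3 * (48*M/s) = 16*M := by field_simp; ring
    linarith
  have him : z.re < 0 → s * t ≤ |z.im| := by
    intro h
    have hdδ : d ≤ δ := min_le_left _ _
    exact sector_im hd0 hd2 (lt_of_lt_of_le hzarg (by linarith)) h
  have hlow : ∀ j : ℕ, s/3 * (t + j) ≤ ‖z + j‖ := by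
    intro j
    have h := sector_lower hs0 hs1 him (j := (j:ℝ)) (Nat.cast_nonneg j)
    have e : (((j:ℝ)):ℂ) = ((j:ℕ):ℂ) := by push_cast; ring
    rw [e] at h
    exact h
  have key1 : ∀ (j : ℕ) (c : ℂ), ‖c‖ ≤ M →
      s/3*(t+j)/2 ≤ ‖z + c + j‖ := by
    intro j c hc
    have h1 := hlow j
    have htri := norm_add_le (z + c + (j:ℂ)) (-c)
    have e2 : (z + c + ((j:ℕ):ℂ)) + (-c) = z + ((j:ℕ):ℂ) := by ring
    rw [e2, norm_neg] at htri
    have hj0 : (0:ℝ) ≤ (j:ℝ) := Nat.cast_nonneg j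
    have h3 : s/3*t ≤ s/3*(t+j) := by nlinarith
    linarith
  have key0 : ∀ (j : ℕ) (c : ℂ), ‖c‖ ≤ M → z + c + j ≠ 0 := by
    intro j c hc h
    have := key1 j c hc
    rw [h] at this
    simp at this
    have hj0 : (0:ℝ) ≤ (j:ℝ) := Nat.cast_nonneg j
    nlinarith
  set w : ℂ := a z - b z with hwdef
  have hwM : ‖w‖ ≤ 2*M := by
    calc ‖w‖ ≤ ‖a z‖ + ‖b z‖ := by
          simpa using norm_sub_le (a z) (b z)
      _ ≤ 2*M := by linarith [haM z, hbM z]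
  -- the series
  set g : ℕ → ℂ := fun j => Complex.log ((z + (b z) + j)/(z + (a z) + j))
      + w * Complex.log ((z + j + 1)/(z + j)) with hgdef
  have hgb : ∀ j : ℕ, ‖g j‖ ≤ K * ((t + j)^2)⁻¹ := by
    intro j
    have hj0 : (0:ℝ) ≤ (j:ℝ) := Nat.cast_nonneg j
    set D : ℝ := s/3*(t+j) with hDdef
    have hD16 : 16*M ≤ D := by
      have : s/3*t ≤ D := by rw [hDdef]; nlinarith
      linarith
    have hD0 : 0 < D := by nlinarith
    have hu : D ≤ ‖z + j‖ := hlow j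
    have huA : D/2 ≤ ‖z + a z + j‖ := key1 j _ (haM z)
    have huA0 : z + a z + (j:ℂ) ≠ 0 := key0 j _ (haM z)
    have huB0 : z + b z + (j:ℂ) ≠ 0 := key0 j _ (hbM z)
    have hu0 : z + (j:ℂ) ≠ 0 := by
      have := key0 j 0 (by simp; linarith)
      simpa using this
    set x₁ : ℂ := (b z - a z)/(z + a z + j) with hx₁def
    set x₂ : ℂ := (z + (j:ℂ))⁻¹ with hx₂def
    have e₁ : (z + b z + (j:ℂ))/(z + a z + (j:ℂ)) = 1 + x₁ := by
      rw [hx₁def]; field_simp; ring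
    have e₂ : (z + (j:ℂ) + 1)/(z + (j:ℂ)) = 1 + x₂ := by
      rw [hx₂def]; field_simp
    have hx₁ : ‖x₁‖ ≤ 4*M/D := by
      rw [hx₁def, norm_div]
      have h1 : ‖b z - a z‖ ≤ 2*M := by
        calc ‖b z - a z‖ ≤ ‖b z‖ + ‖a z‖ := by
              simpa using norm_sub_le (b z) (a z)
        _ ≤ 2*M := by linarith [haM z, hbM z]
      rw [div_le_div_iff₀ (lt_of_lt_of_le (by linarith) huA) (by positivity)]
      nlinarith [norm_nonneg (b z - a z)]
    have hx₁' : ‖x₁‖ ≤ 1/2 := by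
      have : 4*M/D ≤ 1/2 := by
        rw [div_le_div_iff₀ hD0 (by norm_num)]; linarith
      linarith
    have hx₂ : ‖x₂‖ ≤ 2/D := by
      rw [hx₂def, norm_inv]
      have h9 : (‖z+(j:ℂ)‖)⁻¹ ≤ D⁻¹ := by
        apply inv_anti₀ hD0 hu
      have h10 : D⁻¹ ≤ 2/D := by
        rw [inv_eq_one_div]
        gcongr
        norm_num
      linarith
    have hx₂' : ‖x₂‖ ≤ 1/2 := by
      have : 2/D ≤ 1/2 := by
        rw [div_le_div_iff₀ hD0 (by norm_num)]; linarith
      linarith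
    have l₁ : ‖Complex.log (1+x₁) - x₁‖ ≤ (4*M/D)^2 := by
      refine (logest hx₁').trans ?_
      apply pow_le_pow_left₀ (norm_nonneg _) hx₁
    have l₂ : ‖Complex.log (1+x₂) - x₂‖ ≤ (2/D)^2 := by
      refine (logest hx₂').trans ?_
      apply pow_le_pow_left₀ (norm_nonneg _) hx₂
    have l₃ : ‖x₁ + w * x₂‖ ≤ 2*M*M/(D/2*D) := by
      have e3 : x₁ + w * x₂ = (a z - b z) * a z / ((z + a z + j) * (z + j)) := by
        rw [hx₁def, hx₂def, hwdef]; field_simp; ring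
      rw [e3, norm_div, norm_mul, norm_mul]
      apply div_le_div₀ (by positivity) ?_ (by positivity) ?_
      · have h4 : ‖a z - b z‖ ≤ 2*M := by
          calc ‖a z - b z‖ ≤ ‖a z‖ + ‖b z‖ := by
                simpa using norm_sub_le (a z) (b z)
          _ ≤ 2*M := by linarith [haM z, hbM z]
        nlinarith [norm_nonneg (a z - b z), norm_nonneg (a z), haM z]
      · apply mul_le_mul huA hu (by linarith) (norm_nonneg _)
    have hdecomp : g j = (Complex.log (1+x₁) - x₁) + w * (Complex.log (1+x₂) - x₂)
        + (x₁ + w * x₂) := by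
      simp only [hgdef]
      rw [e₁, e₂]
      ring
    have habs : ‖g j‖ ≤ (4*M/D)^2 + 2*M*(2/D)^2 + 2*M*M/(D/2*D) := by
      rw [hdecomp]
      calc ‖_‖ ≤ ‖(Complex.log (1+x₁) - x₁)
            + w * (Complex.log (1+x₂) - x₂)‖ + ‖x₁ + w * x₂‖ :=
          norm_add_le _ _
        _ ≤ ‖Complex.log (1+x₁) - x₁‖
            + ‖w * (Complex.log (1+x₂) - x₂)‖ + ‖x₁ + w * x₂‖ := by
          linarith [norm_add_le (Complex.log (1+x₁) - x₁)
            (w * (Complex.log (1+x₂) - x₂))]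
        _ ≤ (4*M/D)^2 + 2*M*(2/D)^2 + 2*M*M/(D/2*D) := by
          rw [norm_mul]
          have := mul_le_mul hwM l₂ (norm_nonneg _) (by positivity)
          linarith
    refine habs.trans ?_
    have hDeq : D^2 = (s/3)^2 * (t+j)^2 := by rw [hDdef]; ring
    have htj0 : 0 < t + j := by linarith
    have hfin : (4*M/D)^2 + 2*M*(2/D)^2 + 2*M*M/(D/2*D) ≤ 32*M^2/D^2 := by
      have h5 : (4*M/D)^2 + 2*M*(2/D)^2 + 2*M*M/(D/2*D) = (16*M^2 + 8*M + 4*M^2)/D^2 := by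
        field_simp; ring
      rw [h5]
      gcongr
      nlinarith
    refine hfin.trans (le_of_eq ?_)
    rw [hKdef, hDdef]
    have hs' : s ≠ 0 := ne_of_gt hs0
    have htj' : t + (j:ℝ) ≠ 0 := ne_of_gt htj0
    field_simp
    ring
  -- summability of g
  have hsummable : Summable g := by
    refine Summable.of_norm_bounded (f := g) (g := fun j : ℕ => K * ((t + (j:ℝ))^2)⁻¹) ?_ ?_
    · apply Summable.mul_left
      have hbase : Summable (fun n : ℕ => 1/((n:ℝ))^2) :=
        Real.summable_one_div_nat_pow.mpr one_lt_two
      have hshift : Summable (fun j : ℕ => 1/((((j+1:ℕ)):ℝ))^2) :=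
        (summable_nat_add_iff 1).mpr hbase
      apply Summable.of_nonneg_of_le (fun j => by positivity) ?_ hshift
      intro j
      have hj0 : (0:ℝ) ≤ (j:ℝ) := Nat.cast_nonneg j
      have hc : (((j+1:ℕ)):ℝ) = (j:ℝ)+1 := by push_cast; ring
      rw [hc, one_div]
      apply inv_anti₀ (by positivity)
      apply pow_le_pow_left₀ (by linarith) (by linarith)
    · intro j
      simpa using hgb j
  set G : ℂ := ∑' j, g j with hGdef
  have hGsum : HasSum g G := hsummable.hasSum
  have htendG : Tendsto (fun n => ∑ j ∈ Finset.range n, g j) atTop (𝓝 G) :=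
    hGsum.tendsto_sum_nat
  have hGn : ∀ n, ‖∑ j ∈ Finset.range n, g j‖ ≤ K * (t-1)⁻¹ := by
    intro n
    calc ‖∑ j ∈ Finset.range n, g j‖
        ≤ ∑ j ∈ Finset.range n, ‖g j‖ := by
          simpa using norm_sum_le (Finset.range n) g
      _ ≤ ∑ j ∈ Finset.range n, K * ((t+j)^2)⁻¹ := Finset.sum_le_sum (fun j _ => hgb j)
      _ = K * ∑ j ∈ Finset.range n, ((t+j)^2)⁻¹ := by rw [Finset.mul_sum]
      _ ≤ K * (t-1)⁻¹ := mul_le_mul_of_nonneg_left (sum_inv_sq_le ht2 n) hK0.le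
  have hGbound : ‖G‖ ≤ K * (t-1)⁻¹ := by
    have h1 : Tendsto (fun n => ‖∑ j ∈ Finset.range n, g j‖) atTop
        (𝓝 (‖G‖)) := (continuous_norm.continuousAt).tendsto.comp htendG
    exact le_of_tendsto h1 (Filter.Eventually.of_forall hGn)
  have hGeps : ‖G‖ ≤ ε₁ := by
    refine hGbound.trans ?_
    have ht1 : (0:ℝ) < t - 1 := by linarith
    rw [← div_eq_mul_inv, div_le_iff₀ ht1]
    have h2 : K/ε₁ ≤ t - 2 := by linarith
    have h3 := mul_le_mul_of_nonneg_left h2 hε₁.le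
    rw [mul_div_cancel₀ _ (ne_of_gt hε₁)] at h3
    nlinarith
  -- Gamma nonvanishing
  have hGamB : Complex.Gamma (z + b z) ≠ 0 := by
    apply Complex.Gamma_ne_zero
    intro m h
    exact key0 m (b z) (hbM z) (by linear_combination h)
  have hzw : z ^ (a z - b z) ≠ 0 := by
    rw [Complex.cpow_def_of_ne_zero hz0]; exact Complex.exp_ne_zero _
  -- branch lemma for the unit steps
  have hstep : ∀ j : ℕ, Complex.log ((z + j + 1)/(z + j))
      = Complex.log (z + j + 1) - Complex.log (z + j) := by
    intro j
    have hj0 : (0:ℝ) ≤ (j:ℝ) := Nat.cast_nonneg j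
    have habs1 : ‖(1:ℂ)‖ < ‖z + j‖ := by
      have := hlow j
      rw [norm_one]
      nlinarith
    have h2 : (0 ≤ (z+(j:ℂ)).re ∧ 0 ≤ ((z+(j:ℂ))+1).re)
        ∨ (0 ≤ (z+(j:ℂ)).im ∧ 0 ≤ ((z+(j:ℂ))+1).im)
        ∨ ((z+(j:ℂ)).im < 0 ∧ ((z+(j:ℂ))+1).im < 0) := by
      rcases le_or_gt 0 z.im with h | h
      · exact Or.inr (Or.inl ⟨by simpa using h, by simpa using h⟩)
      · exact Or.inr (Or.inr ⟨by simpa using h, by simpa using h⟩)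
    exact (logA habs1 h2).symm
  -- telescoping sum
  have htel : ∀ n : ℕ, ∑ j ∈ Finset.range n,
      (Complex.log (z + j + 1) - Complex.log (z + j))
      = Complex.log (z + n) - Complex.log z := by
    intro n
    have h := Finset.sum_range_sub (f := fun j => Complex.log (z + j)) n
    simp only [Nat.cast_zero, add_zero] at h
    rw [← h]
    apply Finset.sum_congr rfl
    intro j _
    congr 2
    push_cast
    ring
    -- hzw with w
  have hzww : z ^ w ≠ 0 := hzw
  -- the exponent sequence
  set Sf : ℕ → ℂ := fun n => w * (Complex.log n - Complex.log (z + n + 1))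
      + ∑ j ∈ Finset.range (n+1), g j with hSfdef
  -- identity for large n
  have hidn : ∀ n : ℕ, (t + 2 ≤ (n:ℝ)) →
      Complex.GammaSeq (z + a z) n / Complex.GammaSeq (z + b z) n / z ^ w
        = Complex.exp (Sf n) := by
    intro n hn
    have hnpos : (0:ℝ) < (n:ℝ) := by linarith
    have hn0 : (n:ℂ) ≠ 0 := by
      simp only [ne_eq, Nat.cast_eq_zero]
      intro h; rw [h] at hnpos; simp at hnpos
    set PA := ∏ j ∈ Finset.range (n+1), (z + a z + j) with hPA
    set PB := ∏ j ∈ Finset.range (n+1), (z + b z + j) with hPB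
    have hPA0 : PA ≠ 0 := Finset.prod_ne_zero_iff.mpr (fun j _ => key0 j _ (haM z))
    have hPB0 : PB ≠ 0 := Finset.prod_ne_zero_iff.mpr (fun j _ => key0 j _ (hbM z))
    have hfac : (Nat.factorial n : ℂ) ≠ 0 := Nat.cast_ne_zero.mpr (Nat.factorial_ne_zero n)
    have hnB : (n:ℂ) ^ (z + b z) ≠ 0 := by
      rw [Complex.cpow_def_of_ne_zero hn0]; exact Complex.exp_ne_zero _
    have hcp : (n:ℂ)^(z + a z) = (n:ℂ)^w * (n:ℂ)^(z + b z) := by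
      rw [← Complex.cpow_add _ _ hn0]
      congr 1
      rw [hwdef]; ring
    have hratio : Complex.GammaSeq (z + a z) n / Complex.GammaSeq (z + b z) n
        = (n:ℂ)^w * PB / PA := by
      rw [Complex.GammaSeq, Complex.GammaSeq, ← hPA, ← hPB, hcp]
      field_simp
    have hsplit : ∑ j ∈ Finset.range (n+1), g j
        = (∑ j ∈ Finset.range (n+1), Complex.log ((z + b z + j)/(z + a z + j)))
          + w * (Complex.log (z + ((n:ℂ)+1)) - Complex.log z) := by
      simp only [hgdef]
      rw [Finset.sum_add_distrib, ← Finset.mul_sum]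
      congr 1
      have h1 : ∑ j ∈ Finset.range (n+1), Complex.log ((z + j + 1)/(z + j))
          = ∑ j ∈ Finset.range (n+1),
            (Complex.log (z + j + 1) - Complex.log (z + j)) :=
        Finset.sum_congr rfl (fun j _ => hstep j)
      rw [h1, htel (n+1)]
      congr 2
      push_cast
      ring
    have hlogn : Complex.exp (w * Complex.log n) = (n:ℂ)^w := by
      rw [Complex.cpow_def_of_ne_zero hn0, mul_comm]
    have hlogz : Complex.exp (w * Complex.log z) = z^w := by
      rw [Complex.cpow_def_of_ne_zero hz0, mul_comm]
    have hexpsum : Complex.exp (∑ j ∈ Finset.range (n+1),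
        Complex.log ((z + b z + j)/(z + a z + j))) = PB / PA := by
      rw [Complex.exp_sum]
      have h2 : ∀ j ∈ Finset.range (n+1),
          Complex.exp (Complex.log ((z + b z + j)/(z + a z + j)))
          = (z + b z + j)/(z + a z + j) := fun j _ =>
        Complex.exp_log (div_ne_zero (key0 j _ (hbM z)) (key0 j _ (haM z)))
      rw [Finset.prod_congr rfl h2, Finset.prod_div_distrib, ← hPA, ← hPB]
    have hSfn : Sf n = w * Complex.log n - w * Complex.log z
        + ∑ j ∈ Finset.range (n+1), Complex.log ((z + b z + j)/(z + a z + j)) := by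
      simp only [hSfdef]
      rw [hsplit, show z + ((n:ℂ)+1) = z + (n:ℂ) + 1 from by ring]
      ring
    rw [hratio, hSfn, Complex.exp_add, Complex.exp_sub, hexpsum, hlogn, hlogz,
      div_div, div_mul_div_comm, mul_comm PA (z^w)]
  -- limits
  have hT1 : Tendsto (fun n => Complex.GammaSeq (z + a z) n
      / Complex.GammaSeq (z + b z) n / z ^ w) atTop
      (𝓝 (Complex.Gamma (z + a z) / Complex.Gamma (z + b z) / z ^ w)) :=
    ((Complex.GammaSeq_tendsto_Gamma (z + a z)).div
      (Complex.GammaSeq_tendsto_Gamma (z + b z)) hGamB).div_const _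
  have hT0 : Tendsto (fun n : ℕ => w * (Complex.log n - Complex.log (z + n + 1)))
      atTop (𝓝 0) := by
    apply squeeze_zero_norm' (a := fun n : ℕ => (2*M) * ((3/2) * ((t+1) * (1/(n:ℝ)))))
    · filter_upwards [eventually_ge_atTop (⌈2*t+4⌉₊)] with n hn
      have hnR : 2*t + 4 ≤ (n:ℝ) := le_trans (Nat.le_ceil _) (Nat.cast_le.mpr hn)
      have hnpos : (0:ℝ) < (n:ℝ) := by linarith
      have hn0 : (n:ℂ) ≠ 0 := by
        simp only [ne_eq, Nat.cast_eq_zero]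
        intro h; rw [h] at hnpos; simp at hnpos
      have habsz1 : ‖z + 1‖ ≤ t + 1 := by
        calc ‖z+1‖ ≤ ‖z‖ + ‖1‖ := norm_add_le _ _
          _ = t + 1 := by rw [norm_one, ← htdef]
      have habsn : ‖(n:ℂ)‖ = (n:ℝ) := Complex.norm_natCast n
      have hlt : ‖z + 1‖ < ‖(n:ℂ)‖ := by
        rw [habsn]; linarith
      have hrez : -t ≤ z.re := by
        have h5 := Complex.abs_re_le_norm z
        rw [← htdef] at h5
        rw [abs_le] at h5
        linarith [h5.1]
      have hre : 0 ≤ ((n:ℂ)).re ∧ 0 ≤ (((n:ℂ)) + (z+1)).re := by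
        constructor
        · simp only [Complex.natCast_re]; positivity
        · simp only [Complex.add_re, Complex.natCast_re, Complex.one_re]
          linarith
      have hloga := logA hlt (Or.inl hre)
      rw [show ((n:ℂ)) + (z+1) = z + (n:ℂ) + 1 from by ring] at hloga
      have e2 : (z + (n:ℂ) + 1)/((n:ℂ)) = 1 + (z+1)/(n:ℂ) := by
        field_simp
        ring
      have hxb : ‖(z+1)/(n:ℂ)‖ ≤ (t+1) * (1/(n:ℝ)) := by
        rw [norm_div, habsn]
        rw [div_le_iff₀ hnpos]
        calc ‖z+1‖ ≤ t + 1 := habsz1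
          _ = (t+1) * 1 := by ring
          _ ≤ (t + 1) * (1 / ↑n) * ↑n := by
            rw [mul_assoc, one_div_mul_cancel (ne_of_gt hnpos)]
      have hxhalf : ‖(z+1)/(n:ℂ)‖ ≤ 1/2 := by
        refine hxb.trans ?_
        rw [mul_one_div, div_le_div_iff₀ hnpos (by norm_num)]
        linarith
      have hwM' : ‖w‖ ≤ 2*M := hwM
      calc ‖w * (Complex.log (n:ℂ) - Complex.log (z + n + 1))‖
          = ‖w‖ * ‖Complex.log (z + n + 1) - Complex.log (n:ℂ)‖ := by
            rw [norm_mul, norm_sub_rev (Complex.log ((n:ℕ):ℂ)) (Complex.log (z + ((n:ℕ):ℂ) + 1))]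
        _ = ‖w‖ * ‖Complex.log (1 + (z+1)/(n:ℂ))‖ := by
            rw [hloga, e2]
        _ ≤ (2*M) * ((3/2) * ‖(z+1)/(n:ℂ)‖) := by
            apply mul_le_mul hwM' (Complex.norm_log_one_add_half_le_self hxhalf)
              (norm_nonneg _) (by linarith)
        _ ≤ (2*M) * ((3/2) * ((t+1) * (1/(n:ℝ)))) := by
            have h6 : (3/2 : ℝ) * ‖(z+1)/(n:ℂ)‖ ≤ (3/2) * ((t+1) * (1/(n:ℝ))) := by
              linarith
            apply mul_le_mul_of_nonneg_left h6 (by linarith)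
    · have h := tendsto_one_div_atTop_nhds_zero_nat.const_mul ((2*M) * ((3/2) * (t+1)))
      rw [mul_zero] at h
      exact Tendsto.congr (fun n => by ring) h
  have hT2 : Tendsto Sf atTop (𝓝 G) := by
    have hpart : Tendsto (fun n => ∑ j ∈ Finset.range (n+1), g j) atTop (𝓝 G) :=
      htendG.comp (tendsto_add_atTop_nat 1)
    have h := hT0.add hpart
    rw [zero_add] at h
    exact h
  have hT3 : Tendsto (fun n => Complex.exp (Sf n)) atTop (𝓝 (Complex.exp G)) :=
    (Complex.continuous_exp.continuousAt).tendsto.comp hT2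
  have heqv : (fun n => Complex.GammaSeq (z + a z) n / Complex.GammaSeq (z + b z) n
      / z ^ w) =ᶠ[atTop] (fun n => Complex.exp (Sf n)) := by
    filter_upwards [eventually_ge_atTop (⌈t+2⌉₊)] with n hn
    exact hidn n (le_trans (Nat.le_ceil _) (Nat.cast_le.mpr hn))
  have hFG : Complex.Gamma (z + a z) / Complex.Gamma (z + b z) / z ^ w
      = Complex.exp G :=
    tendsto_nhds_unique hT1 (hT3.congr' heqv.symm)
  rw [hFG]
  have h1 : ‖G‖ ≤ 1 := le_trans hGeps (min_le_right _ _)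
  have h2 := Complex.norm_exp_sub_one_le (x := G) h1
  have h3 : ε₁ ≤ ε/4 := min_le_left _ _
  calc ‖Complex.exp G - 1‖ ≤ 2 * ‖G‖ := h2
    _ ≤ 2 * ε₁ := by linarith
    _ < ε := by linarith
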